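/- Let A be self-adjoint positive definite and B surjective with adjoint B* on finite-dimensional inner product spaces, ε > 0, A^ε = A + ε^{-1}B*B, S = BA^{-1}B*, S^ε = B(A^ε)^{-1}B*. Then for every eigenvalue μ of S, the quantity μ/(ε+μ) is an eigenvalue of ε^{-1}S^ε, and in particular the spectral radius of I − ε^{-1}S^ε equals ε/(ε + μ_0) where μ_0 is the smallest eigenvalue of S. -/

import Mathlib

open scoped RealInnerProductSpace

/-- Eigenvalue mapping for the perturbed Schur complement: each eigenvalue `μ` of
`S = B A⁻¹ B*` yields the eigenvalue `μ/(ε+μ)` of `ε⁻¹ Sᵉ`, and the spectral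
radius of `I − ε⁻¹ Sᵉ` equals `ε/(ε+μ₀)` with `μ₀` the smallest eigenvalue of `S`. -/
theorem schur_complement_eigenvalue_mapping
    {V W : Type*}
    [NormedAddCommGroup V] [InnerProductSpace ℝ V] [FiniteDimensional ℝ V]
    [NormedAddCommGroup W] [InnerProductSpace ℝ W] [FiniteDimensional ℝ W]
    (A : V →ₗ[ℝ] V)
    (hA_sym : ∀ x y : V, ⟪A x, y⟫ = ⟪x, A y⟫)
    (hA_pos : ∀ x : V, x ≠ 0 → 0 < ⟪A x, x⟫)
    (B : V →ₗ[ℝ] W) (hB_surj : Function.Surjective B)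
    (Bs : W →ₗ[ℝ] V) (hBs : ∀ (q : W) (x : V), ⟪Bs q, x⟫ = ⟪q, B x⟫)
    (ε : ℝ) (hε : 0 < ε)
    (Ainv : V →ₗ[ℝ] V) (hAinv : ∀ x, A (Ainv x) = x) (hAinv' : ∀ x, Ainv (A x) = x)
    (Aεinv : V →ₗ[ℝ] V)
    (hAεinv : ∀ x, (A + ε⁻¹ • (Bs ∘ₗ B)) (Aεinv x) = x)
    (hAεinv' : ∀ x, Aεinv ((A + ε⁻¹ • (Bs ∘ₗ B)) x) = x)
    (μ0 : ℝ) (hμ0pos : 0 < μ0)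
    (hμ0eig : Module.End.HasEigenvalue (B ∘ₗ Ainv ∘ₗ Bs) μ0)
    (hμ0min : ∀ μ : ℝ, Module.End.HasEigenvalue (B ∘ₗ Ainv ∘ₗ Bs) μ → μ0 ≤ μ) :
    (∀ μ : ℝ, Module.End.HasEigenvalue (B ∘ₗ Ainv ∘ₗ Bs) μ →
      Module.End.HasEigenvalue (ε⁻¹ • (B ∘ₗ Aεinv ∘ₗ Bs)) (μ / (ε + μ))) ∧
    Module.End.HasEigenvalue
      ((LinearMap.id : W →ₗ[ℝ] W) - ε⁻¹ • (B ∘ₗ Aεinv ∘ₗ Bs)) (ε / (ε + μ0)) ∧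
    (∀ lam : ℝ,
      Module.End.HasEigenvalue
        ((LinearMap.id : W →ₗ[ℝ] W) - ε⁻¹ • (B ∘ₗ Aεinv ∘ₗ Bs)) lam →
      |lam| ≤ ε / (ε + μ0)) := by
  have hεne : ε ≠ 0 := hε.ne'
  -- Part 1
  have part1 : ∀ μ : ℝ, Module.End.HasEigenvalue (B ∘ₗ Ainv ∘ₗ Bs) μ →
      Module.End.HasEigenvalue (ε⁻¹ • (B ∘ₗ Aεinv ∘ₗ Bs)) (μ / (ε + μ)) := by
    intro μ hμ
    have hμpos : 0 < μ := lt_of_lt_of_le hμ0pos (hμ0min μ hμ)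
    have hεμ : ε + μ ≠ 0 := by positivity
    obtain ⟨v, hv⟩ := hμ.exists_hasEigenvector
    have hvne : v ≠ 0 := hv.2
    have hveq : B (Ainv (Bs v)) = μ • v := hv.apply_eq_smul
    have h1 : Aεinv (Bs v + ε⁻¹ • Bs (B (Ainv (Bs v)))) = Ainv (Bs v) := by
      have := hAεinv' (Ainv (Bs v))
      simpa [hAinv, LinearMap.add_apply, LinearMap.smul_apply, LinearMap.comp_apply]
        using this
    rw [hveq, map_smul, smul_smul] at h1
    have h1' : Aεinv ((1 + ε⁻¹ * μ) • Bs v) = Ainv (Bs v) := by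
      rw [add_smul, one_smul]; exact h1
    rw [map_smul] at h1'
    have h2 : (1 + ε⁻¹ * μ) • B (Aεinv (Bs v)) = μ • v := by
      rw [← map_smul, h1', hveq]
    have hc : 1 + ε⁻¹ * μ ≠ 0 := by positivity
    have h3 : B (Aεinv (Bs v)) = (μ / (1 + ε⁻¹ * μ)) • v := by
      rw [div_eq_inv_mul, mul_smul, ← h2, ← smul_assoc, smul_eq_mul,
        inv_mul_cancel₀ hc, one_smul]
    have heig : (ε⁻¹ • (B ∘ₗ Aεinv ∘ₗ Bs)) v = (μ / (ε + μ)) • v := by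
      have : ε⁻¹ * (μ / (1 + ε⁻¹ * μ)) = μ / (ε + μ) := by
        field_simp
      simp only [LinearMap.smul_apply, LinearMap.comp_apply, h3, smul_smul, this]
    exact Module.End.hasEigenvalue_of_hasEigenvector
      ⟨Module.End.mem_eigenspace_iff.mpr heig, hvne⟩
  have hεμ0 : ε + μ0 ≠ 0 := by positivity
  refine ⟨part1, ?_, ?_⟩
  · obtain ⟨v, hv⟩ := (part1 μ0 hμ0eig).exists_hasEigenvector
    have hveq := hv.apply_eq_smul
    have heig : ((LinearMap.id : W →ₗ[ℝ] W) - ε⁻¹ • (B ∘ₗ Aεinv ∘ₗ Bs)) v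
        = (ε / (ε + μ0)) • v := by
      have h : (1 : ℝ) - μ0 / (ε + μ0) = ε / (ε + μ0) := by field_simp; ring
      rw [LinearMap.sub_apply, LinearMap.id_apply, hveq, ← h, sub_smul, one_smul]
    exact Module.End.hasEigenvalue_of_hasEigenvector
      ⟨Module.End.mem_eigenspace_iff.mpr heig, hv.2⟩
  · intro lam hlam
    obtain ⟨w, hw⟩ := hlam.exists_hasEigenvector
    have hwne : w ≠ 0 := hw.2
    have hweq : ((LinearMap.id : W →ₗ[ℝ] W) - ε⁻¹ • (B ∘ₗ Aεinv ∘ₗ Bs)) w = lam • w :=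
      hw.apply_eq_smul
    have hT : B (Aεinv (Bs w)) = (ε * (1 - lam)) • w := by
      have : w - ε⁻¹ • B (Aεinv (Bs w)) = lam • w := by
        simpa [LinearMap.sub_apply, LinearMap.smul_apply, LinearMap.comp_apply] using hweq
      have h' : ε⁻¹ • B (Aεinv (Bs w)) = (1 - lam) • w := by
        rw [sub_smul, one_smul, ← this]; abel
      calc B (Aεinv (Bs w)) = ε • ε⁻¹ • B (Aεinv (Bs w)) := by
            rw [smul_smul, mul_inv_cancel₀ hεne, one_smul]
        _ = (ε * (1 - lam)) • w := by rw [h', smul_smul]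
    -- reverse identity
    have hrev : Aεinv (Bs w) + ε⁻¹ • Ainv (Bs (B (Aεinv (Bs w)))) = Ainv (Bs w) := by
      have h0 : A (Aεinv (Bs w)) + ε⁻¹ • Bs (B (Aεinv (Bs w))) = Bs w := by
        have := hAεinv (Bs w)
        simpa [LinearMap.add_apply, LinearMap.smul_apply, LinearMap.comp_apply] using this
      have := congrArg Ainv h0
      simpa [map_add, map_smul, hAinv'] using this
    have hrevB : B (Aεinv (Bs w)) + ε⁻¹ • B (Ainv (Bs (B (Aεinv (Bs w)))))
        = B (Ainv (Bs w)) := by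
      have := congrArg B hrev
      simpa [map_add, map_smul] using this
    rw [hT] at hrevB
    have hSw : (ε * (1 - lam)) • w + (1 - lam) • B (Ainv (Bs w)) = B (Ainv (Bs w)) := by
      have h2 : Bs ((ε * (1 - lam)) • w) = (ε * (1 - lam)) • Bs w := map_smul _ _ _
      rw [h2, map_smul, map_smul, smul_smul] at hrevB
      have : ε⁻¹ * (ε * (1 - lam)) = 1 - lam := by field_simp
      rwa [this] at hrevB
    -- lam ≠ 0
    have hlam_Sw : lam • B (Ainv (Bs w)) = (ε * (1 - lam)) • w := by
      have h1 : lam • B (Ainv (Bs w))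
          = B (Ainv (Bs w)) - (1 - lam) • B (Ainv (Bs w)) := by
        rw [sub_smul, one_smul]; abel
      exact h1.trans (eq_sub_of_add_eq hSw).symm
    by_cases hlam0 : lam = 0
    · exfalso
      rw [hlam0, zero_smul] at hlam_Sw
      simp only [hlam0, sub_zero, mul_one] at hlam_Sw
      exact hwne (smul_eq_zero.mp hlam_Sw.symm |>.resolve_left hεne)
    · have hSweq : B (Ainv (Bs w)) = (ε * (1 - lam) / lam) • w := by
        rw [div_eq_inv_mul, mul_smul, ← hlam_Sw, ← smul_assoc, smul_eq_mul,
          inv_mul_cancel₀ hlam0, one_smul]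
      set μ := ε * (1 - lam) / lam with hμdef
      have hμeig : Module.End.HasEigenvalue (B ∘ₗ Ainv ∘ₗ Bs) μ :=
        Module.End.hasEigenvalue_of_hasEigenvector
          ⟨Module.End.mem_eigenspace_iff.mpr (by
            simpa [LinearMap.comp_apply] using hSweq), hwne⟩
      have hμge : μ0 ≤ μ := hμ0min μ hμeig
      have hμpos : 0 < μ := lt_of_lt_of_le hμ0pos hμge
      have hεμ : ε + μ ≠ 0 := by positivity
      have hlam_eq : lam = ε / (ε + μ) := by
        have : lam * (ε + μ) = ε := by
          rw [hμdef]; field_simp; ring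
        field_simp [hεμ] at this ⊢
        linarith [this]
      have hlampos : 0 < lam := by
        rw [hlam_eq]; positivity
      rw [abs_of_pos hlampos, hlam_eq]
      apply div_le_div_of_nonneg_left hε.le (by positivity)
      linarith
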